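/- Let H be a numerical semigroup of genus g whose smallest nonzero element is at least 3. Write the gaps of H in increasing order as ℓ_1 < ℓ_2 < ... < ℓ_g. Then ℓ_i ≤ 2i−2 for all i with 2 ≤ i ≤ g−1, and ℓ_g ≤ 2g−1. -/

import Mathlib

theorem oliveira_gap_bounds
    (g : ℕ) (H : Set ℕ)
    (h0 : 0 ∈ H) (hadd : ∀ a ∈ H, ∀ b ∈ H, a + b ∈ H)
    (hfin : {n : ℕ | n ∉ H}.Finite) (hg : {n : ℕ | n ∉ H}.ncard = g)
    (hmult : ∀ h ∈ H, h ≠ 0 → 3 ≤ h)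
    (ℓ : Fin g → ℕ) (hmono : StrictMono ℓ)
    (hrange : Set.range ℓ = {n : ℕ | n ∉ H}) :
    (∀ i : Fin g, 2 ≤ (i : ℕ) + 1 → (i : ℕ) + 1 ≤ g - 1 →
      ℓ i ≤ 2 * ((i : ℕ) + 1) - 2) ∧
    (∀ i : Fin g, (i : ℕ) + 1 = g → ℓ i ≤ 2 * g - 1) := by
  classical
  have hgap : ∀ j : Fin g, ℓ j ∉ H := by
    intro j
    have : ℓ j ∈ Set.range ℓ := ⟨j, rfl⟩
    rw [hrange] at this
    exact this
  have h1 : (1 : ℕ) ∉ H := fun h => by have := hmult 1 h one_ne_zero; omega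
  have h2 : (2 : ℕ) ∉ H := fun h => by have := hmult 2 h two_ne_zero; omega
  have hsub : ∀ x, x ∉ H → ∀ s, s ∈ H → s ≤ x → x - s ∉ H := by
    intro x hx s hs hsx hmem
    have := hadd s hs _ hmem
    rw [Nat.add_sub_cancel' hsx] at this
    exact hx this
  -- counting: number of gaps below ℓ i is exactly i
  have hcount : ∀ i : Fin g,
      ((Finset.range (ℓ i)).filter (fun n => n ∉ H)).card = (i : ℕ) := by
    intro i
    rw [← Fin.card_Iio i]
    symm
    apply Finset.card_nbij (fun j => ℓ j)
    · intro j hj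
      simp only [Finset.mem_coe, Finset.mem_Iio] at hj
      simp only [Finset.mem_coe, Finset.mem_filter, Finset.mem_range]
      exact ⟨hmono hj, hgap j⟩
    · exact fun a _ b _ h => hmono.injective h
    · intro n hn
      simp only [Finset.coe_filter, Finset.mem_range, Set.mem_setOf_eq] at hn
      have : n ∈ Set.range ℓ := by rw [hrange]; exact hn.2
      obtain ⟨j, rfl⟩ := this
      refine ⟨j, ?_, rfl⟩
      simp only [Finset.coe_Iio, Set.mem_Iio]
      exact hmono.lt_iff_lt.mp hn.1
  -- general upper bound ℓ i ≤ 2 i + 1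
  have hub : ∀ i : Fin g, ℓ i ≤ 2 * (i : ℕ) + 1 := by
    intro i
    by_contra hcon
    push_neg at hcon
    set c : ℕ → ℕ := fun a => if a ∉ H then a else ℓ i - a with hc
    have hle := Finset.card_le_card_of_injOn c
      (s := Finset.Icc 1 ((i : ℕ) + 1))
      (t := (Finset.range (ℓ i)).filter (fun n => n ∉ H)) ?_ ?_
    · rw [hcount i, Nat.card_Icc] at hle
      omega
    · intro a ha
      simp only [Finset.mem_coe, Finset.mem_Icc] at ha
      simp only [Finset.mem_coe, Finset.mem_filter, Finset.mem_range, hc]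
      by_cases hA : a ∉ H
      · rw [if_pos hA]
        exact ⟨by omega, hA⟩
      · rw [if_neg hA]
        push_neg at hA
        refine ⟨by omega, fun hmem => ?_⟩
        have := hadd a hA _ hmem
        rw [Nat.add_sub_cancel' (by omega : a ≤ ℓ i)] at this
        exact hgap i this
    · intro a ha b hb hab
      simp only [Finset.coe_Icc, Set.mem_Icc] at ha hb
      simp only [hc] at hab
      by_cases hA : a ∉ H <;> by_cases hB : b ∉ H
      · rw [if_pos hA, if_pos hB] at hab; exact hab
      · rw [if_pos hA, if_neg hB] at hab; push_neg at hB; exfalso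
        have hab' : a = b := by omega
        exact hA (hab' ▸ hB)
      · rw [if_neg hA, if_pos hB] at hab; push_neg at hA; exfalso
        have hab' : a = b := by omega
        exact hB (hab' ▸ hA)
      · rw [if_neg hA, if_neg hB] at hab; omega
  refine ⟨?_, ?_⟩
  · -- strengthened bound
    intro i hi2 hig
    by_contra hcon
    push_neg at hcon
    have hL : ℓ i = 2 * (i : ℕ) + 1 := by have := hub i; omega
    set L : ℕ := ℓ i with hLdef
    have hi1 : 1 ≤ (i : ℕ) := by omega
    have higlt : (i : ℕ) + 1 < g := by
      have := i.isLt
      omega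
    -- exactly one gap per pair: surjectivity of c on Icc 1 i
    set c : ℕ → ℕ := fun a => if a ∉ H then a else L - a with hc
    have hmaps : ∀ a ∈ Finset.Icc 1 (i : ℕ),
        c a ∈ (Finset.range L).filter (fun n => n ∉ H) := by
      intro a ha
      simp only [Finset.mem_Icc] at ha
      simp only [Finset.mem_filter, Finset.mem_range, hc]
      by_cases hA : a ∉ H
      · rw [if_pos hA]; exact ⟨by omega, hA⟩
      · rw [if_neg hA]
        push_neg at hA
        refine ⟨by omega, fun hmem => ?_⟩
        have := hadd a hA _ hmem
        rw [Nat.add_sub_cancel' (by omega : a ≤ L)] at this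
        exact hgap i this
    have hinj : ∀ a₁ ∈ Finset.Icc 1 (i : ℕ), ∀ a₂ ∈ Finset.Icc 1 (i : ℕ),
        c a₁ = c a₂ → a₁ = a₂ := by
      intro a ha b hb hab
      simp only [Finset.mem_Icc] at ha hb
      simp only [hc] at hab
      by_cases hA : a ∉ H <;> by_cases hB : b ∉ H
      · rw [if_pos hA, if_pos hB] at hab; exact hab
      · rw [if_pos hA, if_neg hB] at hab; omega
      · rw [if_neg hA, if_pos hB] at hab; omega
      · rw [if_neg hA, if_neg hB] at hab; omega
    have hsurj := Finset.surj_on_of_inj_on_of_card_le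
      (s := Finset.Icc 1 (i : ℕ))
      (t := (Finset.range L).filter (fun n => n ∉ H))
      (fun a _ => c a) (fun a ha => hmaps a ha)
      (fun a b ha hb h => hinj a ha b hb h)
      (by rw [hcount i, Nat.card_Icc]; omega)
    -- key: for a gap v in [1, L-1], L - v is a non-gap
    have K : ∀ v, v ∉ H → 1 ≤ v → v ≤ L - 1 → L - v ∈ H := by
      intro v hv hv1 hvL
      by_contra hLv
      -- let w be the smaller of v, L - v
      have key : ∀ w, w ∉ H → L - w ∉ H → 1 ≤ w → w ≤ (i : ℕ) → False := by
        intro w hw hLw hw1 hwi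
        have hmem : L - w ∈ (Finset.range L).filter (fun n => n ∉ H) := by
          simp only [Finset.mem_filter, Finset.mem_range]
          exact ⟨by omega, hLw⟩
        obtain ⟨a, ha, haeq⟩ := hsurj _ hmem
        simp only [Finset.mem_Icc] at ha
        simp only [hc] at haeq
        by_cases hA : a ∉ H
        · rw [if_pos hA] at haeq; omega
        · rw [if_neg hA] at haeq; push_neg at hA
          have : a = w := by omega
          exact hw (this ▸ hA)
      rcases le_or_gt v (i : ℕ) with hvi | hvi
      · exact key v hv hLv (by omega) hvi
      · exact key (L - v) hLv (by rwa [show L - (L - v) = v by omega]) (by omega) (by omega)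
    have hLm1 : L - 1 ∈ H := K 1 h1 le_rfl (by omega)
    have hLm2 : L - 2 ∈ H := K 2 h2 (by omega) (by omega)
    -- m : the next gap after L
    set i' : Fin g := ⟨(i : ℕ) + 1, higlt⟩ with hi'
    set m : ℕ := ℓ i' with hm
    have hLm : L < m := hmono (by simp [hi', Fin.lt_def])
    have hmgap : m ∉ H := hgap i'
    have hminimal : ∀ w, w ∉ H → L < w → m ≤ w := by
      intro w hw hLw
      have : w ∈ Set.range ℓ := by rw [hrange]; exact hw
      obtain ⟨j, rfl⟩ := this
      have hij : i < j := hmono.lt_iff_lt.mp hLw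
      have : i' ≤ j := by
        rw [Fin.le_def]
        have := hij
        rw [Fin.lt_def] at this
        simp [hi']
        omega
      exact hmono.monotone this
    -- descent
    have desc : ∀ d v, m - v ≤ d → 2 ≤ v → v + 1 < m → v ∉ H → v + 1 ∉ H → False := by
      intro d
      induction d with
      | zero => intro v hd _ hvm _ _; omega
      | succ d ih =>
        intro v hd h2v hvm hv hv1
        rcases lt_or_ge (v + 1) L with hcase | hcase
        · -- step: v + 1 ≤ L - 1
          have hA : L - v ∈ H := K v hv (by omega) (by omega)
          have hB : L - (v + 1) ∈ H := K (v + 1) hv1 (by omega) (by omega)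
          have hg1 : m - (L - v) ∉ H := hsub m hmgap _ hA (by omega)
          have hg2 : m - (L - (v + 1)) ∉ H := hsub m hmgap _ hB (by omega)
          set v' : ℕ := m - (L - v) with hv'
          have he2 : m - (L - (v + 1)) = v' + 1 := by omega
          rw [he2] at hg2
          exact ih v' (by omega) (by omega) (by omega) hg1 hg2
        · rcases eq_or_lt_of_le hcase with heq | hlt
          · exact hv (by rw [show v = L - 1 by omega]; exact hLm1)
          · have := hminimal (v + 1) hv1 hlt
            omega
    -- base of descent
    have hb1 : m - (L - 1) ∉ H := hsub m hmgap _ hLm1 (by omega)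
    have hb2 : m - (L - 2) ∉ H := hsub m hmgap _ hLm2 (by omega)
    have he : m - (L - 2) = (m - (L - 1)) + 1 := by omega
    rw [he] at hb2
    exact desc (m - (m - (L - 1))) (m - (L - 1)) le_rfl (by omega) (by omega) hb1 hb2
  · intro i hig
    have := hub i
    omega
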